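/- Suppose all vote shares p_d are distinct, p_d ≠ 1/2 for every d, and S_F ≤ S_PR. Then for every weight w ≥ 0, every seat total S* that minimizes Φ_p(·; w) over {0,…,N} satisfies S_F ≤ S* ≤ S_PR. -/

import Mathlib

open Finset

/-- Sum of the `S` largest entries of the vote-share profile `p`. -/
noncomputable def topSum {N : ℕ} (p : Fin N → ℝ) (S : ℕ) : ℝ :=
  ∑ i : Fin N, if (i : ℕ) < S then p (Tuple.sort p i.rev) else 0

/-- `ordStat p i` is the `(i+1)`-th largest entry of `p` (so `ordStat p ⟨S-1,_⟩` is `p_(S)`). -/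
noncomputable def ordStat {N : ℕ} (p : Fin N → ℝ) (i : Fin N) : ℝ :=
  p (Tuple.sort p i.rev)

/-- Total misrepresentation `Φ_p(S; w) = S + a − 2·Γ_p(S) + w·|a − S|` of a top-`S`
allocation at weight `w`, where `a = ∑ d, p d`. -/
noncomputable def PhiS {N : ℕ} (p : Fin N → ℝ) (S : ℕ) (w : ℝ) : ℝ :=
  (S : ℝ) + (∑ d, p d) - 2 * topSum p S + w * |(∑ d, p d) - (S : ℝ)|

lemma topSum_succ {N : ℕ} (p : Fin N → ℝ) (S : ℕ) (hS : S < N) :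
    topSum p (S + 1) = topSum p S + ordStat p ⟨S, hS⟩ := by
  have h : ∀ i : Fin N,
      (if (i : ℕ) < S + 1 then ordStat p i else 0)
        = (if (i : ℕ) < S then ordStat p i else 0)
          + (if i = ⟨S, hS⟩ then ordStat p i else 0) := by
    intro i
    rcases lt_trichotomy (i : ℕ) S with h | h | h
    · rw [if_pos (by omega), if_pos h, if_neg (by
        intro e; rw [e] at h; simp at h)]
      ring
    · have hi : i = ⟨S, hS⟩ := Fin.ext h
      subst hi
      rw [if_pos (by simp), if_neg (by simp), if_pos rfl]
      ring
    · rw [if_neg (by omega), if_neg (by omega), if_neg (by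
        intro e; rw [e] at h; simp at h)]
      ring
  calc topSum p (S + 1) = ∑ i : Fin N, (if (i : ℕ) < S + 1 then ordStat p i else 0) := rfl
    _ = topSum p S + ordStat p ⟨S, hS⟩ := by
        rw [Finset.sum_congr rfl (fun i _ => h i), Finset.sum_add_distrib,
          Finset.sum_ite_eq' Finset.univ (⟨S, hS⟩ : Fin N) (ordStat p),
          if_pos (Finset.mem_univ _)]
        rfl

lemma ordStat_half {N : ℕ} (p : Fin N → ℝ) (hinj : Function.Injective p) (i : Fin N) :
    (i : ℕ) < (Finset.univ.filter fun d => (1 : ℝ) / 2 ≤ p d).card ↔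
      (1 : ℝ) / 2 ≤ ordStat p i := by
  set SF := (Finset.univ.filter fun d => (1 : ℝ) / 2 ≤ p d).card with hSFdef
  have hg : StrictMono fun j => p (Tuple.sort p j) :=
    (Tuple.monotone_sort p).strictMono_of_injective
      (hinj.comp (Tuple.sort p).injective)
  have hcard : (Finset.univ.filter fun j => (1 : ℝ) / 2 ≤ p (Tuple.sort p j)).card = SF := by
    rw [hSFdef]
    apply Finset.card_bij (fun j _ => Tuple.sort p j)
    · intro j hj
      simp only [Finset.mem_filter, Finset.mem_univ, true_and] at hj ⊢
      exact hj
    · intro j1 _ j2 _ e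
      exact (Tuple.sort p).injective e
    · intro d hd
      simp only [Finset.mem_filter, Finset.mem_univ, true_and] at hd
      refine ⟨(Tuple.sort p)⁻¹ d, ?_, by simp⟩
      simp only [Finset.mem_filter, Finset.mem_univ, true_and, Equiv.Perm.coe_inv, Equiv.apply_symm_apply]
      exact hd
  have key : ∀ j : Fin N, ((1 : ℝ) / 2 ≤ p (Tuple.sort p j) ↔ N - SF ≤ (j : ℕ)) := by
    intro j
    constructor
    · intro h
      have hsub : Finset.Ici j ⊆ Finset.univ.filter fun k => (1 : ℝ) / 2 ≤ p (Tuple.sort p k) := by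
        intro k hk
        simp only [Finset.mem_filter, Finset.mem_univ, true_and]
        exact le_trans h (hg.monotone (Finset.mem_Ici.mp hk))
      have hc := Finset.card_le_card hsub
      rw [Fin.card_Ici, hcard] at hc
      have := j.isLt
      omega
    · intro h
      by_contra hc
      have hsub : (Finset.univ.filter fun k => (1 : ℝ) / 2 ≤ p (Tuple.sort p k)) ⊆ Finset.Ioi j := by
        intro k hk
        simp only [Finset.mem_filter, Finset.mem_univ, true_and] at hk
        rw [Finset.mem_Ioi]
        by_contra hk2
        exact hc (le_trans hk (hg.monotone (not_lt.mp hk2)))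
      have hcc := Finset.card_le_card hsub
      rw [Fin.card_Ioi, hcard] at hcc
      have := j.isLt
      omega
  have hSFle : SF ≤ N := by
    rw [hSFdef]
    calc (Finset.univ.filter fun d => (1 : ℝ) / 2 ≤ p d).card
        ≤ (Finset.univ : Finset (Fin N)).card := Finset.card_filter_le _ _
      _ = N := by simp
  have hrev : (i.rev : ℕ) = N - (i + 1) := Fin.val_rev i
  rw [show ordStat p i = p (Tuple.sort p i.rev) from rfl, key i.rev, hrev]
  have := i.isLt
  omega

lemma PhiS_succ {N : ℕ} (p : Fin N → ℝ) (S : ℕ) (hS : S < N) (w : ℝ) :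
    PhiS p (S + 1) w = PhiS p S w + (1 - 2 * ordStat p ⟨S, hS⟩)
      + w * (|(∑ d, p d) - ((S : ℝ) + 1)| - |(∑ d, p d) - (S : ℝ)|) := by
  unfold PhiS
  rw [topSum_succ p S hS]
  push_cast
  ring

/-- Lemma 3: every minimizer lies between `S_F` and `S_PR`.
Suppose all vote shares are distinct, `p_d ≠ 1/2` for every `d`, and `S_F ≤ S_PR`,
where `S_F = #{d : p_d ≥ 1/2}` is the FPTP seat total and `S_PR` is the largest
minimizer of `|a − S|` over `S ∈ {0,…,N}`. Then for every weight `w ≥ 0`, every seat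
total `S*` minimizing `Φ_p(·; w)` over `{0,…,N}` satisfies `S_F ≤ S* ≤ S_PR`. -/
theorem stmt7 (N : ℕ) (hN : 3 ≤ N) (p : Fin N → ℝ)
    (hp : ∀ d, 0 ≤ p d ∧ p d ≤ 1) (hinj : Function.Injective p)
    (hhalf : ∀ d, p d ≠ 1 / 2)
    (SF SPR : ℕ)
    (hSF : SF = (Finset.univ.filter fun d => (1 : ℝ) / 2 ≤ p d).card)
    (hSPR0 : SPR ≤ N)
    (hSPR1 : ∀ S ≤ N, |(∑ d, p d) - (SPR : ℝ)| ≤ |(∑ d, p d) - (S : ℝ)|)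
    (hSPR2 : ∀ S ≤ N, (∀ S' ≤ N, |(∑ d, p d) - (S : ℝ)| ≤ |(∑ d, p d) - (S' : ℝ)|) → S ≤ SPR)
    (hFPR : SF ≤ SPR)
    (w : ℝ) (hw : 0 ≤ w)
    (Sstar : ℕ) (hSstar : Sstar ≤ N)
    (hmin : ∀ S' ≤ N, PhiS p Sstar w ≤ PhiS p S' w) :
    SF ≤ Sstar ∧ Sstar ≤ SPR := by
  set a := ∑ d, p d with ha
  have haN : a ≤ (N : ℝ) := by
    rw [ha]
    calc ∑ d, p d ≤ ∑ _d : Fin N, (1 : ℝ) :=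
          Finset.sum_le_sum fun d _ => (hp d).2
      _ = N := by simp
  have hq_hi : ∀ S (hS : S < N), S < SF → (1 : ℝ) / 2 < ordStat p ⟨S, hS⟩ := by
    intro S hS h
    have h1 : (1 : ℝ) / 2 ≤ ordStat p ⟨S, hS⟩ :=
      (ordStat_half p hinj ⟨S, hS⟩).mp (by rw [← hSF]; exact h)
    have h2 : ordStat p ⟨S, hS⟩ ≠ 1 / 2 := hhalf _
    exact lt_of_le_of_ne h1 (Ne.symm h2)
  have hq_lo : ∀ S (hS : S < N), SF ≤ S → ordStat p ⟨S, hS⟩ < (1 : ℝ) / 2 := by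
    intro S hS h
    by_contra hc
    have := (ordStat_half p hinj ⟨S, hS⟩).mpr (not_lt.mp hc)
    rw [← hSF] at this
    simp only [Fin.val_mk] at this
    omega
  -- Step A : Phi strictly decreasing below SF
  have stepA : ∀ S, S + 1 ≤ SF → PhiS p (S + 1) w < PhiS p S w := by
    intro S hSSF
    have hSN : S < N := by omega
    have hq := hq_hi S hSN (by omega)
    have hSlt : S < SPR := by omega
    have h1 : (S : ℝ) + SPR ≤ 2 * a := by
      have h := hSPR1 S (by omega)
      have hss : (S : ℝ) < SPR := by exact_mod_cast hSlt
      rcases abs_cases (a - (SPR : ℝ)) with ⟨e1, e2⟩ | ⟨e1, e2⟩ <;>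
        rcases abs_cases (a - (S : ℝ)) with ⟨f1, f2⟩ | ⟨f1, f2⟩ <;> linarith
    have hSlt' : (S : ℝ) + 1 ≤ SPR := by exact_mod_cast hSlt
    have ha2 : (S : ℝ) + 1 / 2 ≤ a := by linarith
    have habs : |a - ((S : ℝ) + 1)| ≤ |a - (S : ℝ)| := by
      rcases abs_cases (a - ((S : ℝ) + 1)) with ⟨e1, e2⟩ | ⟨e1, e2⟩ <;>
        rcases abs_cases (a - (S : ℝ)) with ⟨f1, f2⟩ | ⟨f1, f2⟩ <;> linarith
    have hmul : w * (|a - ((S : ℝ) + 1)| - |a - (S : ℝ)|) ≤ 0 :=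
      mul_nonpos_of_nonneg_of_nonpos hw (by linarith)
    rw [PhiS_succ p S hSN w]
    rw [← ha]
    linarith
  -- bound a < SPR + 1/2
  have haSPR : a < (SPR : ℝ) + 1 / 2 := by
    by_contra hc
    push_neg at hc
    have hSPRN : SPR < N := by
      by_contra hc2
      have : SPR = N := by omega
      subst this
      linarith
    have hmin' : ∀ S' ≤ N, |a - ((SPR + 1 : ℕ) : ℝ)| ≤ |a - (S' : ℝ)| := by
      intro S' hS'
      have h1 : |a - ((SPR + 1 : ℕ) : ℝ)| ≤ |a - (SPR : ℝ)| := by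
        push_cast
        rcases abs_cases (a - ((SPR : ℝ) + 1)) with ⟨e1, e2⟩ | ⟨e1, e2⟩ <;>
          rcases abs_cases (a - (SPR : ℝ)) with ⟨f1, f2⟩ | ⟨f1, f2⟩ <;> linarith
      exact le_trans h1 (hSPR1 S' hS')
    have := hSPR2 (SPR + 1) (by omega) hmin'
    omega
  -- Step B : Phi strictly increasing above SPR
  have stepB : ∀ S, SPR ≤ S → S < N → PhiS p S w < PhiS p (S + 1) w := by
    intro S h1 h2
    have hq := hq_lo S h2 (le_trans hFPR h1)
    have hcast : (SPR : ℝ) ≤ S := by exact_mod_cast h1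
    have habs : |a - (S : ℝ)| ≤ |a - ((S : ℝ) + 1)| := by
      rcases abs_cases (a - ((S : ℝ) + 1)) with ⟨e1, e2⟩ | ⟨e1, e2⟩ <;>
        rcases abs_cases (a - (S : ℝ)) with ⟨f1, f2⟩ | ⟨f1, f2⟩ <;> linarith
    have hmul : 0 ≤ w * (|a - ((S : ℝ) + 1)| - |a - (S : ℝ)|) :=
      mul_nonneg hw (by linarith)
    rw [PhiS_succ p S h2 w, ← ha]
    linarith
  -- chain below SF
  have chainA : ∀ d S, S + d + 1 = SF → PhiS p SF w < PhiS p S w := by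
    intro d
    induction d with
    | zero =>
      intro S hS
      have := stepA S (by omega)
      rw [show S + 0 + 1 = S + 1 by ring] at hS
      rw [← hS]
      exact this
    | succ n ih =>
      intro S hS
      have h1 : PhiS p SF w < PhiS p (S + 1) w := ih (S + 1) (by omega)
      have h2 : PhiS p (S + 1) w < PhiS p S w := stepA S (by omega)
      linarith
  -- chain above SPR
  have chainB : ∀ d S, S = SPR + d + 1 → S ≤ N → PhiS p SPR w < PhiS p S w := by
    intro d
    induction d with
    | zero =>
      intro S hS hSN'
      have := stepB SPR (le_refl _) (by omega)
      rw [hS]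
      rw [show SPR + 0 + 1 = SPR + 1 by ring]
      exact this
    | succ n ih =>
      intro S hS hSN'
      have h1 : PhiS p SPR w < PhiS p (SPR + n + 1) w := ih (SPR + n + 1) rfl (by omega)
      have h2 : PhiS p (SPR + n + 1) w < PhiS p (SPR + n + 1 + 1) w :=
        stepB (SPR + n + 1) (by omega) (by omega)
      rw [hS]
      have : SPR + (n + 1) + 1 = SPR + n + 1 + 1 := by ring
      rw [this]
      linarith
  constructor
  · by_contra hc
    push_neg at hc
    have h1 : PhiS p SF w < PhiS p Sstar w := chainA (SF - Sstar - 1) Sstar (by omega)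
    have h2 : PhiS p Sstar w ≤ PhiS p SF w := hmin SF (by omega)
    linarith
  · by_contra hc
    push_neg at hc
    have h1 : PhiS p SPR w < PhiS p Sstar w := chainB (Sstar - SPR - 1) Sstar (by omega) hSstar
    have h2 : PhiS p Sstar w ≤ PhiS p SPR w := hmin SPR (by omega)
    linarith
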